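/- Let X be a 1-acyclic 2-dimensional cell complex whose 2-cells have attaching maps that are circuits of length at most N. If there is C ≥ 0 with FV_{X,ℤ}(k) ≤ C·k for all k, then the 1-skeleton Γ of X satisfies condition FZ_N and a weak linear isoperimetric inequality: every circuit γ in Γ satisfies [γ] = Σ_{i=1}^m εᵢ[γᵢ] in H₁-free terms (as 1-cycles, γ = Σ εᵢ γᵢ) with each γᵢ a circuit of length at most N, εᵢ = ±1, and m ≤ C·|γ|. -/

import Mathlib

open Finsupp

/-- A (combinatorial, oriented) graph: the 1-skeleton data of a complex. -/
structure CGraph where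
  V : Type
  E : Type
  ends : E → V × V

/-- ℓ¹-norm of an integral chain. -/
def l1Z {α : Type} (c : α →₀ ℤ) : ℕ := c.sum fun _ v => v.natAbs

/-- Two chains are disjoint if no basis element has nonzero coefficient in both. -/
def DisjointChains {α : Type} (a b : α →₀ ℤ) : Prop := ∀ x, a x = 0 ∨ b x = 0

namespace CGraph

variable (Γ : CGraph)

/-- Source vertex of a directed edge (an edge with an orientation bit). -/
def src (p : Γ.E × Bool) : Γ.V := if p.2 then (Γ.ends p.1).1 else (Γ.ends p.1).2

/-- Target vertex of a directed edge. -/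
def tgt (p : Γ.E × Bool) : Γ.V := if p.2 then (Γ.ends p.1).2 else (Γ.ends p.1).1

/-- A nonempty cyclically-consecutive list of directed edges. -/
def IsClosedPath (l : List (Γ.E × Bool)) : Prop :=
  l ≠ [] ∧ ∀ i : Fin l.length,
    Γ.tgt (l.get i) = Γ.src (l.get ⟨(↑i + 1) % l.length, Nat.mod_lt _ i.pos⟩)

/-- A circuit: a simple closed combinatorial path (no repeated edges or vertices). -/
def IsCircuit (l : List (Γ.E × Bool)) : Prop :=
  Γ.IsClosedPath l ∧ (l.map Prod.fst).Nodup ∧ (l.map Γ.src).Nodup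

/-- The 1-cycle induced by a closed path: coefficient ±1 on each traversed edge. -/
noncomputable def pathCycle (l : List (Γ.E × Bool)) : Γ.E →₀ ℤ :=
  (l.map fun p => Finsupp.single p.1 (if p.2 then (1 : ℤ) else -1)).sum

/-- The simplicial boundary map `C₁ → C₀`. -/
noncomputable def d1 (γ : Γ.E →₀ ℤ) : Γ.V →₀ ℤ :=
  γ.sum fun e c => c • (Finsupp.single (Γ.ends e).2 (1 : ℤ) - Finsupp.single (Γ.ends e).1 1)

/-- A 1-chain is a cycle if its boundary vanishes. -/
def IsCycle (γ : Γ.E →₀ ℤ) : Prop := Γ.d1 γ = 0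

/-- A graph is fine if each edge lies in only finitely many circuits of each bounded length. -/
def Fine : Prop :=
  ∀ (e : Γ.E) (L : ℕ),
    {l : List (Γ.E × Bool) | Γ.IsCircuit l ∧ e ∈ l.map Prod.fst ∧ l.length ≤ L}.Finite

/-- Walks from `u` to `v`. -/
def IsWalk : List (Γ.E × Bool) → Γ.V → Γ.V → Prop
  | [], u, v => u = v
  | p :: l, u, v => Γ.src p = u ∧ IsWalk l (Γ.tgt p) v

/-- Combinatorial distance in a graph (∞ if there is no walk). -/
noncomputable def gdist (u v : Γ.V) : ℕ∞ :=
  ⨅ l ∈ {l : List (Γ.E × Bool) | Γ.IsWalk l u v}, (l.length : ℕ∞)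

def Connected : Prop := ∀ u v : Γ.V, Γ.gdist u v < ⊤

/-- Gromov hyperbolicity via the four-point condition. -/
def Hyperbolic : Prop :=
  ∃ δ : ℕ, ∀ x y z w : Γ.V,
    Γ.gdist x y + Γ.gdist z w ≤
      max (Γ.gdist x z + Γ.gdist y w) (Γ.gdist x w + Γ.gdist y z) + (δ : ℕ∞)

end CGraph

/-- A combinatorial 2-complex: a graph together with a set of 2-cells, each with a
boundary 1-chain. -/
structure TwoComplex extends toGraph : CGraph where
  F : Type
  fb : F → E →₀ ℤ

namespace TwoComplex

variable (X : TwoComplex)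

/-- The boundary map `C₂ → C₁` over ℤ. -/
noncomputable def d2 (μ : X.F →₀ ℤ) : X.E →₀ ℤ := μ.sum fun f c => c • X.fb f

/-- The filling norm `‖γ‖_∂` over ℤ (∞ if `γ` bounds no 2-chain). -/
noncomputable def fillNorm (γ : X.E →₀ ℤ) : ℕ∞ :=
  ⨅ μ ∈ {μ : X.F →₀ ℤ | X.d2 μ = γ}, (l1Z μ : ℕ∞)

/-- The homological Dehn function of `X` over ℤ. -/
noncomputable def FV (k : ℕ) : ℕ∞ :=
  ⨆ γ ∈ {γ : X.E →₀ ℤ | X.toGraph.IsCycle γ ∧ l1Z γ ≤ k}, X.fillNorm γ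

end TwoComplex


section Helpers

lemma l1Z_eq_sum {α : Type} (c : α →₀ ℤ) (s : Finset α) (h : c.support ⊆ s) :
    l1Z c = ∑ x ∈ s, (c x).natAbs := by
  classical
  unfold l1Z Finsupp.sum
  exact Finset.sum_subset h (fun x _ hx => by
    simp [Finsupp.notMem_support_iff.mp hx])

lemma l1Z_add_le {α : Type} (a b : α →₀ ℤ) : l1Z (a + b) ≤ l1Z a + l1Z b := by
  classical
  rw [l1Z_eq_sum (a + b) (a.support ∪ b.support) Finsupp.support_add,
    l1Z_eq_sum a (a.support ∪ b.support) Finset.subset_union_left,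
    l1Z_eq_sum b (a.support ∪ b.support) Finset.subset_union_right,
    ← Finset.sum_add_distrib]
  exact Finset.sum_le_sum fun x _ => by
    simp only [Finsupp.add_apply]; exact Int.natAbs_add_le _ _

lemma l1Z_listSum_le {α : Type} (L : List (α →₀ ℤ)) :
    l1Z L.sum ≤ (L.map l1Z).sum := by
  induction L with
  | nil => simp [l1Z]
  | cons a t ih =>
      simp only [List.sum_cons, List.map_cons]
      exact le_trans (l1Z_add_le a t.sum) (by omega)

lemma l1Z_single {α : Type} (a : α) (c : ℤ) : l1Z (Finsupp.single a c) = c.natAbs := by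
  unfold l1Z
  exact Finsupp.sum_single_index rfl

lemma CGraph.d1_single (Γ : CGraph) (e : Γ.E) (c : ℤ) :
    Γ.d1 (Finsupp.single e c)
      = c • (Finsupp.single (Γ.ends e).2 (1 : ℤ) - Finsupp.single (Γ.ends e).1 1) := by
  unfold CGraph.d1
  exact Finsupp.sum_single_index (zero_smul _ _)

lemma CGraph.d1_add (Γ : CGraph) (a b : Γ.E →₀ ℤ) : Γ.d1 (a + b) = Γ.d1 a + Γ.d1 b := by
  unfold CGraph.d1
  exact Finsupp.sum_add_index' (fun _ => zero_smul _ _) (fun _ b₁ b₂ => add_smul _ _ _)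

lemma CGraph.d1_zero (Γ : CGraph) : Γ.d1 0 = 0 := by
  unfold CGraph.d1; simp

lemma CGraph.d1_listSum (Γ : CGraph) (L : List (Γ.E →₀ ℤ)) :
    Γ.d1 L.sum = (L.map Γ.d1).sum := by
  induction L with
  | nil => simpa using Γ.d1_zero
  | cons a t ih => simp [Γ.d1_add, ih]

lemma CGraph.d1_dirEdge (Γ : CGraph) (p : Γ.E × Bool) :
    Γ.d1 (Finsupp.single p.1 (if p.2 then (1 : ℤ) else -1))
      = Finsupp.single (Γ.tgt p) 1 - Finsupp.single (Γ.src p) 1 := by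
  rw [Γ.d1_single]
  unfold CGraph.tgt CGraph.src
  cases hb : p.2 <;> simp

/-- Sum of a mapped list as a `Fin` sum. -/
lemma listMapSum {α M : Type*} [AddCommMonoid M] (l : List α) (f : α → M) :
    (l.map f).sum = ∑ i : Fin l.length, f (l.get i) := by
  induction l with
  | nil => simp
  | cons a t ih =>
      rw [List.map_cons, List.sum_cons, ih]
      rw [show ∑ i : Fin (a :: t).length, f ((a :: t).get i)
          = ∑ i : Fin (t.length + 1), f ((a :: t).get (i.cast rfl)) from rfl,
        Fin.sum_univ_succ]
      rfl

/-- A closed path gives a 1-cycle. -/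
lemma CGraph.isCycle_pathCycle (Γ : CGraph) (l : List (Γ.E × Bool))
    (h : Γ.IsClosedPath l) : Γ.IsCycle (Γ.pathCycle l) := by
  obtain ⟨hne, hcyc⟩ := h
  unfold CGraph.IsCycle CGraph.pathCycle
  rw [Γ.d1_listSum, List.map_map, listMapSum]
  have heq : ∀ i : Fin l.length,
      (Γ.d1 ∘ fun p => Finsupp.single p.1 (if p.2 then (1:ℤ) else -1)) (l.get i)
      = Finsupp.single (Γ.tgt (l.get i)) 1 - Finsupp.single (Γ.src (l.get i)) 1 :=
    fun i => Γ.d1_dirEdge _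
  rw [Finset.sum_congr rfl (fun i _ => heq i), Finset.sum_sub_distrib]
  have hn : NeZero l.length := ⟨fun h0 => hne (List.length_eq_zero_iff.mp h0)⟩
  have key : ∑ i : Fin l.length, Finsupp.single (Γ.tgt (l.get i)) (1:ℤ)
      = ∑ i : Fin l.length, Finsupp.single (Γ.src (l.get i)) (1:ℤ) := by
    refine Fintype.sum_equiv (Equiv.addRight (1 : Fin l.length))
      (fun i => Finsupp.single (Γ.tgt (l.get i)) (1:ℤ))
      (fun i => Finsupp.single (Γ.src (l.get i)) (1:ℤ)) ?_
    intro i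
    have hidx : ((Equiv.addRight (1 : Fin l.length)) i)
        = (⟨(↑i + 1) % l.length, Nat.mod_lt _ i.pos⟩ : Fin l.length) := by
      apply Fin.ext
      simp [Equiv.coe_addRight, Fin.add_def, Fin.val_one', Nat.add_mod]
    simp only [hidx, hcyc i]
  rw [key, sub_self]

lemma sum_flatMap' {α M : Type*} [AddCommMonoid M] (L : List α) (g : α → List M) :
    (L.flatMap g).sum = (L.map fun a => (g a).sum).sum := by
  induction L with
  | nil => simp
  | cons a t ih => simp [ih]

end Helpers

/-- If X is a 1-acyclic 2-complex whose 2-cells are attached along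
circuits of length at most N and FV_{X,ℤ}(k) ≤ C·k, then the 1-skeleton satisfies
condition FZ_N with a weak linear isoperimetric inequality: every circuit is a signed
sum of at most C·|γ| circuits of length at most N. -/
theorem FZ_and_weak_linear_isoperimetric (X : TwoComplex)
    (hbd : ∀ f : X.F, X.toGraph.d1 (X.fb f) = 0)
    (hconn : X.toGraph.Connected)
    (hH1 : ∀ γ : X.E →₀ ℤ, X.toGraph.IsCycle γ → ∃ μ : X.F →₀ ℤ, X.d2 μ = γ)
    (N : ℕ)
    (hcells : ∀ f : X.F, ∃ l : List (X.E × Bool),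
      X.toGraph.IsCircuit l ∧ l.length ≤ N ∧ X.fb f = X.toGraph.pathCycle l)
    (C : ℕ) (hFV : ∀ k : ℕ, X.FV k ≤ ((C * k : ℕ) : ℕ∞)) :
    ∀ l : List (X.E × Bool), X.toGraph.IsCircuit l →
      ∃ cs : List (List (X.E × Bool) × ℤ),
        (∀ p ∈ cs, X.toGraph.IsCircuit p.1 ∧ p.1.length ≤ N ∧ (p.2 = 1 ∨ p.2 = -1)) ∧
        X.toGraph.pathCycle l = (cs.map fun p => p.2 • X.toGraph.pathCycle p.1).sum ∧
        cs.length ≤ C * l.length := by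
  classical
  intro l hl
  set γ := X.toGraph.pathCycle l with hγ
  have hcyc : X.toGraph.IsCycle γ := X.toGraph.isCycle_pathCycle l hl.1
  -- the ℓ¹ norm of the circuit cycle is at most its length
  have hlen : l1Z γ ≤ l.length := by
    have h1 : l1Z γ ≤ ((l.map fun p =>
        Finsupp.single p.1 (if p.2 then (1:ℤ) else -1)).map l1Z).sum := by
      rw [hγ]; exact l1Z_listSum_le _
    have h2 : ((l.map fun p =>
        Finsupp.single p.1 (if p.2 then (1:ℤ) else -1)).map l1Z).sum = l.length * 1 := by
      rw [List.map_map]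
      rw [List.sum_eq_card_nsmul _ 1 (fun x hx => by
        obtain ⟨p, _, rfl⟩ := List.mem_map.mp hx
        simp only [Function.comp_apply, l1Z_single]
        split <;> rfl)]
      simp
    omega
  -- the filling norm is bounded by C * length
  have hfill : X.fillNorm γ ≤ ((C * l.length : ℕ) : ℕ∞) := by
    refine le_trans ?_ (hFV l.length)
    exact le_trans (le_iSup₂ (f := fun γ _ => X.fillNorm γ) γ ⟨hcyc, hlen⟩) le_rfl
  -- extract a filling μ with small ℓ¹ norm
  have hlt : X.fillNorm γ < ((C * l.length + 1 : ℕ) : ℕ∞) :=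
    lt_of_le_of_lt hfill (by exact_mod_cast Nat.lt_succ_self _)
  unfold TwoComplex.fillNorm at hlt
  obtain ⟨μ, hμlt⟩ := iInf_lt_iff.mp hlt
  obtain ⟨hμmem, hμlt2⟩ := iInf_lt_iff.mp hμlt
  have hμd2 : X.d2 μ = γ := hμmem
  have hμn : l1Z μ ≤ C * l.length := by
    have : (l1Z μ : ℕ∞) < ((C * l.length + 1 : ℕ) : ℕ∞) := hμlt2
    exact Nat.lt_succ_iff.mp (by exact_mod_cast this)
  -- choose circuits for the 2-cells
  choose cf hcf1 hcf2 hcf3 using hcells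
  refine ⟨μ.support.toList.flatMap (fun f =>
      List.replicate (μ f).natAbs (cf f, if 0 ≤ μ f then (1:ℤ) else -1)), ?_, ?_, ?_⟩
  · intro p hp
    obtain ⟨f, _, hp2⟩ := List.mem_flatMap.mp hp
    have := List.eq_of_mem_replicate hp2
    subst this
    refine ⟨hcf1 f, hcf2 f, ?_⟩
    split <;> simp
  · rw [List.map_flatMap]
    simp only [List.map_replicate]
    rw [sum_flatMap']
    rw [Finset.sum_map_toList μ.support (fun f =>
      (List.replicate (μ f).natAbs
        ((if 0 ≤ μ f then (1:ℤ) else -1) • X.toGraph.pathCycle (cf f))).sum)]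
    have : ∀ f ∈ μ.support,
        (List.replicate (μ f).natAbs
          ((if 0 ≤ μ f then (1:ℤ) else -1) • X.toGraph.pathCycle (cf f))).sum
        = μ f • X.fb f := by
      intro f _
      rw [List.sum_replicate, ← natCast_zsmul, smul_smul, hcf3 f]
      congr 1
      have := Int.natAbs_of_nonneg (a := μ f)
      split <;> rename_i h
      · rw [Int.natAbs_of_nonneg h]; ring
      · rw [Int.ofNat_natAbs_of_nonpos (le_of_lt (not_le.mp h))]; ring
    rw [Finset.sum_congr rfl this]
    rw [← hμd2]
    rfl
  · rw [List.length_flatMap]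
    have : (List.map (List.length ∘ fun f =>
        List.replicate (μ f).natAbs (cf f, if 0 ≤ μ f then (1:ℤ) else -1))
        μ.support.toList).sum = l1Z μ := by
      rw [show (List.length ∘ fun f =>
          List.replicate (μ f).natAbs (cf f, if 0 ≤ μ f then (1:ℤ) else -1))
          = fun f => (μ f).natAbs from funext fun f => List.length_replicate]
      rw [Finset.sum_map_toList]
      rfl
    simp only [Function.comp_def] at this
    omega
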